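/- Define matrices Rot_s(θ) of size 2^s × 2^s for s ≥ 1 and real θ recursively by Rot_1(θ) = S_θ and Rot_{s+1}(θ) = Rot_s(θ/2) ⊗ |0⟩⟨0| + Rot_s((θ+1)/2) ⊗ |1⟩⟨1|, where the last tensor factor is the least significant qubit (the control). Then for every s ≥ 1, every real θ, every bit b ∈ {0,1}, and every 0 ≤ k < 2^{s−1}, identifying the index b·2^{s−1} + k of ℂ^{2^s} with the pair (b, k) (most significant bit first): Rot_s(θ)·e_{(b,k)} = (S_{(k+θ)/2^{s−1}}·e_b) ⊗ e_k. That is, the recursively defined Rot circuit applies to the first qubit the gate S with parameter (value of the remaining bits + θ)/2^{s−1}, leaving the remaining qubits unchanged. -/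

import Mathlib

open Matrix
open scoped Kronecker

/-- The single-qubit gate `S_θ = (1/√2)·[[1, 1], [exp(iπθ), −exp(iπθ)]]`. -/
noncomputable def Sgate (θ : ℝ) : Matrix (Fin 2) (Fin 2) ℂ :=
  !![1 / (Real.sqrt 2 : ℂ), 1 / (Real.sqrt 2 : ℂ);
     Complex.exp (Complex.I * Real.pi * θ) / (Real.sqrt 2 : ℂ),
       -(Complex.exp (Complex.I * Real.pi * θ)) / (Real.sqrt 2 : ℂ)]

/-- The projection `|0⟩⟨0|`. -/
noncomputable def proj0 : Matrix (Fin 2) (Fin 2) ℂ := !![1, 0; 0, 0]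

/-- The projection `|1⟩⟨1|`. -/
noncomputable def proj1 : Matrix (Fin 2) (Fin 2) ℂ := !![0, 0; 0, 1]

/-- Index identification `Fin (2^(s+1)) × Fin 2 ≃ Fin (2^(s+2))`,
most significant bits first (the last factor is the least significant qubit). -/
def rotIdx (s : ℕ) : Fin (2^(s+1)) × Fin 2 ≃ Fin (2^(s+2)) :=
  finProdFinEquiv.trans (finCongr (by ring))

/-- The recursively defined rotation circuit: `Rot 1 θ = S_θ` and
`Rot (s+1) θ = Rot s (θ/2) ⊗ |0⟩⟨0| + Rot s ((θ+1)/2) ⊗ |1⟩⟨1|`,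
the last tensor factor being the least significant qubit (the control). -/
noncomputable def Rot : (s : ℕ) → ℝ → Matrix (Fin (2^s)) (Fin (2^s)) ℂ
  | 0, _ => 1
  | 1, θ => Sgate θ
  | (s+2), θ =>
      Matrix.reindex (rotIdx s) (rotIdx s)
        (Rot (s+1) (θ/2) ⊗ₖ proj0 + Rot (s+1) ((θ+1)/2) ⊗ₖ proj1)

lemma single_comp_equiv {α β : Type*} [DecidableEq α] [DecidableEq β] (e : α ≃ β) (b0 : β) (x : ℂ) :
    (Pi.single b0 x) ∘ e = Pi.single (e.symm b0) x := by
  funext a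
  simp [Pi.single_apply, Function.comp, Equiv.apply_eq_iff_eq_symm_apply]

lemma rotIdx_symm_apply (m : ℕ) (x : Fin (2^(m+2))) :
    (rotIdx m).symm x =
      (⟨x.val / 2, by
          have hx := x.isLt
          have h : (2:ℕ)^(m+2) = 2^(m+1)*2 := by ring
          exact Nat.div_lt_of_lt_mul (by omega)⟩,
       ⟨x.val % 2, Nat.mod_lt _ two_pos⟩) := rfl

set_option maxHeartbeats 1000000 in
lemma Rot_aux : ∀ (n : ℕ) (θ : ℝ) (b : Fin 2) (k : ℕ) (hk : k < 2^n),
    (Rot (n+1) θ).mulVec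
        (Pi.single (⟨b.val * 2^n + k, by
            have hb : b.val ≤ 1 := Nat.lt_succ_iff.mp b.isLt
            have h1 : b.val * 2^n ≤ 1 * 2^n := Nat.mul_le_mul_right _ hb
            have h : (2:ℕ)^(n+1) = 2^n * 2 := by ring
            omega⟩ : Fin (2^(n+1))) (1 : ℂ)) =
      fun i : Fin (2^(n+1)) =>
        (Sgate (((k : ℝ) + θ) / (2:ℝ)^n)).mulVec (Pi.single b 1)
            ⟨i.val / 2^n, by
              have h : (2:ℕ)^(n+1) = 2^n * 2 := by ring
              exact Nat.div_lt_of_lt_mul (by have := i.isLt; omega)⟩ *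
          (if i.val % 2^n = k then 1 else 0)
  | 0, θ, b, k, hk => by
      have hk0 : k = 0 := by simpa using hk
      subst hk0
      rw [show Rot (0+1) θ = Sgate θ from rfl]
      funext i
      simp [mulVec_single, Fin.eta, Nat.mod_one]
  | (m+1), θ, b, k, hk => by
      have hb : b.val ≤ 1 := Nat.lt_succ_iff.mp b.isLt
      have hpm : (0:ℕ) < 2^m := Nat.pow_pos (by norm_num)
      have h2 : (2:ℕ)^(m+1) = 2^m*2 := by ring
      have hk' : k / 2 < 2^m := Nat.div_lt_of_lt_mul (by omega)
      have hA := Rot_aux m (θ/2) b (k/2) hk'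
      have hB := Rot_aux m ((θ+1)/2) b (k/2) hk'
      have hA' : ∀ i1 : Fin (2^(m+1)), Rot (m+1) (θ/2) i1
          ⟨b.val * 2^m + k/2, by
            have h1 : b.val * 2^m ≤ 1 * 2^m := Nat.mul_le_mul_right _ hb
            omega⟩ =
          Sgate ((((k/2 : ℕ)) + θ/2) / (2:ℝ)^m)
            ⟨i1.val / 2^m, Nat.div_lt_of_lt_mul (by have := i1.isLt; omega)⟩ b *
            (if i1.val % 2^m = k/2 then 1 else 0) := by
        intro i1
        have := congrFun hA i1
        simpa [mulVec_single] using this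
      have hB' : ∀ i1 : Fin (2^(m+1)), Rot (m+1) ((θ+1)/2) i1
          ⟨b.val * 2^m + k/2, by
            have h1 : b.val * 2^m ≤ 1 * 2^m := Nat.mul_le_mul_right _ hb
            omega⟩ =
          Sgate ((((k/2 : ℕ)) + (θ+1)/2) / (2:ℝ)^m)
            ⟨i1.val / 2^m, Nat.div_lt_of_lt_mul (by have := i1.isLt; omega)⟩ b *
            (if i1.val % 2^m = k/2 then 1 else 0) := by
        intro i1
        have := congrFun hB i1
        simpa [mulVec_single] using this
      funext i
      rw [show Rot (m+1+1) θ = Matrix.reindex (rotIdx m) (rotIdx m)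
          (Rot (m+1) (θ/2) ⊗ₖ proj0 + Rot (m+1) ((θ+1)/2) ⊗ₖ proj1) from rfl]
      rw [Matrix.reindex_apply, Matrix.submatrix_mulVec_equiv, Equiv.symm_symm,
        single_comp_equiv, rotIdx_symm_apply]
      simp only [Function.comp_apply]
      rw [rotIdx_symm_apply]
      -- index arithmetic on the column index
      have e1 : (b.val * 2^(m+1) + k) / 2 = b.val * 2^m + k/2 := by
        have h : b.val * 2^(m+1) + k = 2*(b.val * 2^m) + k := by ring
        rw [h, Nat.mul_add_div two_pos]
      have e2 : (b.val * 2^(m+1) + k) % 2 = k % 2 := by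
        have h : b.val * 2^(m+1) + k = 2*(b.val * 2^m) + k := by ring
        rw [h, Nat.mul_add_mod]
      simp only [e1, e2, Matrix.add_mulVec, Pi.add_apply, mulVec_single,
        Matrix.add_apply, Matrix.kroneckerMap_apply, mul_one,
        MulOpposite.op_one, one_smul, Matrix.col_apply]
      rw [hA', hB']
      -- arithmetic facts about i
      have f0 : i.val / 2 / 2^m = i.val / 2^(m+1) := by
        rw [Nat.div_div_eq_div_mul]; congr 1; ring
      have f1 : i.val % 2^(m+1) = i.val % 2 + 2*((i.val/2) % 2^m) := by
        have h : (2:ℕ)^(m+1) = 2*2^m := by ring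
        rw [h, Nat.mod_mul]
      have f2 : (i.val/2) % 2^m < 2^m := Nat.mod_lt _ hpm
      simp only [f0]
      rcases Nat.mod_two_eq_zero_or_one k with hc | hc <;>
        rcases Nat.mod_two_eq_zero_or_one i.val with hi | hi <;>
        simp only [hc, hi, Fin.mk_zero, Fin.mk_one]
      · have hp : (((k/2 : ℕ) : ℝ) + θ/2) / (2:ℝ)^m = ((k:ℝ) + θ) / (2:ℝ)^(m+1) := by
          have hkk : k = 2*(k/2) := by omega
          have h := congrArg (fun x : ℕ => (x:ℝ)) hkk
          push_cast at h
          rw [h, pow_succ]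
          field_simp
        have hcond : (i.val/2 % 2^m = k/2) = (i.val % 2^(m+1) = k) := by
          apply propext; constructor <;> intro h <;> omega
        rw [hp]
        simp only [hcond]
        simp [proj0, proj1]
      · have hcond : (i.val % 2^(m+1) = k) = False := by
          apply propext; constructor <;> intro h
          · omega
          · exact h.elim
        simp only [hcond, if_false]
        simp [proj0, proj1]
      · have hcond : (i.val % 2^(m+1) = k) = False := by
          apply propext; constructor <;> intro h
          · omega
          · exact h.elim
        simp only [hcond, if_false]
        simp [proj0, proj1]
      · have hp : (((k/2 : ℕ) : ℝ) + (θ+1)/2) / (2:ℝ)^m = ((k:ℝ) + θ) / (2:ℝ)^(m+1) := by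
          have hkk : k = 2*(k/2) + 1 := by omega
          have h := congrArg (fun x : ℕ => (x:ℝ)) hkk
          push_cast at h
          rw [h, pow_succ]
          field_simp
          ring
        have hcond : (i.val/2 % 2^m = k/2) = (i.val % 2^(m+1) = k) := by
          apply propext; constructor <;> intro h <;> omega
        rw [hp]
        simp only [hcond]
        simp [proj0, proj1]

lemma two_pow_pred {s : ℕ} (hs : 1 ≤ s) : 2^(s-1) * 2 = 2^s := by
  rw [← pow_succ]; congr 1; omega

/-- for `s ≥ 1`, real `θ`, a bit `b`, and `0 ≤ k < 2^(s-1)`,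
`Rot s θ · e_{(b,k)} = (S_{(k+θ)/2^{s-1}} · e_b) ⊗ e_k`: the `Rot` circuit applies to the
first qubit the gate `S` with parameter `(k + θ)/2^{s-1}`, leaving the remaining qubits
unchanged. -/
theorem Rot_correct (s : ℕ) (hs : 1 ≤ s) (θ : ℝ) (b : Fin 2) (k : ℕ) (hk : k < 2^(s-1)) :
    (Rot s θ).mulVec
        (Pi.single (⟨b.val * 2^(s-1) + k, by
            have h := two_pow_pred hs
            have hb : b.val ≤ 1 := Nat.lt_succ_iff.mp b.isLt
            have h1 : b.val * 2^(s-1) ≤ 1 * 2^(s-1) := Nat.mul_le_mul_right _ hb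
            omega⟩ : Fin (2^s)) (1 : ℂ)) =
      fun i : Fin (2^s) =>
        (Sgate (((k : ℝ) + θ) / (2:ℝ)^(s-1))).mulVec (Pi.single b 1)
            ⟨i.val / 2^(s-1), by
              have h := two_pow_pred hs; have hi := i.isLt
              exact Nat.div_lt_of_lt_mul (by omega)⟩ *
          (if i.val % 2^(s-1) = k then 1 else 0) := by
  obtain ⟨n, rfl⟩ : ∃ n, s = n + 1 := ⟨s - 1, by omega⟩
  exact Rot_aux n θ b k hk
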